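/- The graph F_ℓ (defined on A ∪ B ∪ C with A = {a₁,…,a_{ℓ+1}}, B = {b₀,…,b_{3ℓ+1}}, C = {c₁,…,c_ℓ} and the edges of the absorbing gadget) has degeneracy at most 2 with respect to an ordering whose initial segment is A; that is, there exists an ordering of V(F_ℓ) beginning with a₁,…,a_{ℓ+1} (in some order) such that every vertex has at most 2 neighbours preceding it in the ordering. -/
import Mathlib


def gA (k : ℕ) : ℕ ⊕ ℕ ⊕ ℕ := Sum.inl k
def gB (k : ℕ) : ℕ ⊕ ℕ ⊕ ℕ := Sum.inr (Sum.inl k)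
def gC (k : ℕ) : ℕ ⊕ ℕ ⊕ ℕ := Sum.inr (Sum.inr k)

/-- The coloured (directed) edges of the gadget `F_ℓ`. -/
def gadgetEdgeAux (ℓ c : ℕ) (u v : ℕ ⊕ ℕ ⊕ ℕ) : Prop :=
  (u = gA 1 ∧ v = gB 0 ∧ c = 1) ∨ (u = gB 0 ∧ v = gC 1 ∧ c = 1) ∨
  (u = gA 1 ∧ v = gB 1 ∧ c = 2) ∨ (u = gB 1 ∧ v = gC 1 ∧ c = 2) ∨
  (u = gA (ℓ+1) ∧ v = gB (3*ℓ) ∧ c = 4*ℓ+1) ∨ (u = gB (3*ℓ) ∧ v = gC ℓ ∧ c = 4*ℓ+1) ∨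
  (u = gA (ℓ+1) ∧ v = gB (3*ℓ+1) ∧ c = 4*ℓ+2) ∨ (u = gB (3*ℓ+1) ∧ v = gC ℓ ∧ c = 4*ℓ+2) ∨
  (∃ i, 1 ≤ i ∧ i ≤ ℓ - 1 ∧
    ((u = gA (i+1) ∧ v = gB (3*i) ∧ c = 4*i+1) ∨
     (u = gB (3*i) ∧ v = gC i ∧ c = 4*i+1) ∨
     (u = gB (3*i) ∧ v = gC (i+1) ∧ c = 4*i+1) ∨
     (u = gA (i+1) ∧ v = gB (3*i+1) ∧ c = 4*i+2) ∨
     (u = gB (3*i+1) ∧ v = gC i ∧ c = 4*i+2) ∨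
     (u = gB (3*i+1) ∧ v = gC (i+1) ∧ c = 4*i+2))) ∨
  (∃ i j, i ≤ ℓ - 1 ∧ (j = 1 ∨ j = 2) ∧
    u = gB (3*i+j) ∧ v = gB (3*i+j+1) ∧ c = 4*i+j+2)

/-- The (uncoloured, symmetric) adjacency relation of the gadget `F_ℓ`. -/
def gadgetAdj (ℓ : ℕ) (u v : ℕ ⊕ ℕ ⊕ ℕ) : Prop :=
  ∃ c, gadgetEdgeAux ℓ c u v ∨ gadgetEdgeAux ℓ c v u

/-- The vertex set of `F_ℓ`: `A ∪ B ∪ C`. -/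
def gadgetVerts (ℓ : ℕ) : Set (ℕ ⊕ ℕ ⊕ ℕ) :=
  {x | (∃ k, 1 ≤ k ∧ k ≤ ℓ + 1 ∧ x = gA k) ∨ (∃ k ≤ 3*ℓ + 1, x = gB k) ∨
    (∃ k, 1 ≤ k ∧ k ≤ ℓ ∧ x = gC k)}

lemma st10_edge_char {ℓ c : ℕ} (hℓ : 1 ≤ ℓ) {u v : ℕ ⊕ ℕ ⊕ ℕ}
    (h : gadgetEdgeAux ℓ c u v) :
    (∃ t, t ≤ ℓ ∧ u = gA (t+1) ∧ (v = gB (3*t) ∨ v = gB (3*t+1))) ∨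
    (∃ t, 1 ≤ t ∧ t ≤ ℓ ∧ v = gC t ∧
      (u = gB (3*t-3) ∨ u = gB (3*t-2) ∨ u = gB (3*t) ∨ u = gB (3*t+1))) ∨
    (∃ t j, t < ℓ ∧ (j = 1 ∨ j = 2) ∧ u = gB (3*t+j) ∧ v = gB (3*t+j+1)) := by
  unfold gadgetEdgeAux at h
  rcases h with ⟨h1,h2,-⟩|⟨h1,h2,-⟩|⟨h1,h2,-⟩|⟨h1,h2,-⟩|⟨h1,h2,-⟩|⟨h1,h2,-⟩|⟨h1,h2,-⟩|⟨h1,h2,-⟩|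
    ⟨i,hi1,hi2,(⟨h1,h2,-⟩|⟨h1,h2,-⟩|⟨h1,h2,-⟩|⟨h1,h2,-⟩|⟨h1,h2,-⟩|⟨h1,h2,-⟩)⟩|
    ⟨i,j,hi,hj,h1,h2,-⟩
  · exact Or.inl ⟨0, by omega, by simpa using h1, Or.inl (by simpa using h2)⟩
  · exact Or.inr (Or.inl ⟨1, by omega, by omega, h2, Or.inl (by simpa using h1)⟩)
  · exact Or.inl ⟨0, by omega, by simpa using h1, Or.inr (by simpa using h2)⟩
  · exact Or.inr (Or.inl ⟨1, by omega, by omega, h2, Or.inr (Or.inl (by simpa using h1))⟩)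
  · exact Or.inl ⟨ℓ, by omega, h1, Or.inl h2⟩
  · exact Or.inr (Or.inl ⟨ℓ, by omega, by omega, h2, Or.inr (Or.inr (Or.inl h1))⟩)
  · exact Or.inl ⟨ℓ, by omega, h1, Or.inr h2⟩
  · exact Or.inr (Or.inl ⟨ℓ, by omega, by omega, h2, Or.inr (Or.inr (Or.inr h1))⟩)
  · exact Or.inl ⟨i, by omega, h1, Or.inl h2⟩
  · exact Or.inr (Or.inl ⟨i, by omega, by omega, h2, Or.inr (Or.inr (Or.inl h1))⟩)
  · refine Or.inr (Or.inl ⟨i+1, by omega, by omega, h2, Or.inl ?_⟩)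
    have e : 3*(i+1)-3 = 3*i := by omega
    rw [h1, e]
  · exact Or.inl ⟨i, by omega, h1, Or.inr h2⟩
  · exact Or.inr (Or.inl ⟨i, by omega, by omega, h2, Or.inr (Or.inr (Or.inr h1))⟩)
  · refine Or.inr (Or.inl ⟨i+1, by omega, by omega, h2, Or.inr (Or.inl ?_)⟩)
    have e : 3*(i+1)-2 = 3*i+1 := by omega
    rw [h1, e]
  · exact Or.inr (Or.inr ⟨i, j, by omega, hj, h1, h2⟩)

def st10_ord (ℓ i : ℕ) : ℕ ⊕ ℕ ⊕ ℕ :=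
  if i ≤ ℓ then gA (i+1)
  else if i < 4*ℓ+3 then
    (if (i - ℓ) % 3 = 0 then gC ((i - ℓ)/3) else gB (i - ℓ - 1))
  else gB (3*(i - (4*ℓ+3)) + 2)

def st10_pos (ℓ : ℕ) : ℕ ⊕ ℕ ⊕ ℕ → ℕ
  | Sum.inl k => k - 1
  | Sum.inr (Sum.inl m) => if m % 3 = 2 then 4*ℓ+3+m/3 else ℓ+m+1
  | Sum.inr (Sum.inr t) => ℓ+3*t

lemma st10_pos_A (ℓ k : ℕ) : st10_pos ℓ (gA k) = k - 1 := rfl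
lemma st10_pos_C (ℓ t : ℕ) : st10_pos ℓ (gC t) = ℓ + 3*t := rfl
lemma st10_pos_B (ℓ m : ℕ) (h : m % 3 ≠ 2) : st10_pos ℓ (gB m) = ℓ + m + 1 := by
  show (if m % 3 = 2 then 4*ℓ+3+m/3 else ℓ+m+1) = _
  rw [if_neg h]
lemma st10_pos_B2 (ℓ m : ℕ) (h : m % 3 = 2) : st10_pos ℓ (gB m) = 4*ℓ+3+m/3 := by
  show (if m % 3 = 2 then 4*ℓ+3+m/3 else ℓ+m+1) = _
  rw [if_pos h]

lemma st10_pos_ord (ℓ : ℕ) (i : ℕ) (hi : i < 5*ℓ+3) :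
    st10_ord ℓ i ∈ gadgetVerts ℓ ∧ st10_pos ℓ (st10_ord ℓ i) = i := by
  unfold st10_ord
  split_ifs with h1 h2 h3
  · refine ⟨Or.inl ⟨i+1, by omega, by omega, rfl⟩, ?_⟩
    rw [st10_pos_A]; omega
  · refine ⟨Or.inr (Or.inr ⟨(i-ℓ)/3, by omega, by omega, rfl⟩), ?_⟩
    rw [st10_pos_C]; omega
  · refine ⟨Or.inr (Or.inl ⟨i-ℓ-1, by omega, rfl⟩), ?_⟩
    rw [st10_pos_B ℓ _ (by omega)]; omega
  · refine ⟨Or.inr (Or.inl ⟨3*(i-(4*ℓ+3))+2, by omega, rfl⟩), ?_⟩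
    rw [st10_pos_B2 ℓ _ (by omega)]; omega

lemma st10_ord_pos (ℓ : ℕ) (hℓ : 1 ≤ ℓ) (v : ℕ ⊕ ℕ ⊕ ℕ) (hv : v ∈ gadgetVerts ℓ) :
    st10_pos ℓ v < 5*ℓ+3 ∧ st10_ord ℓ (st10_pos ℓ v) = v := by
  rcases hv with ⟨k, hk1, hk2, rfl⟩ | ⟨m, hm, rfl⟩ | ⟨t, ht1, ht2, rfl⟩
  · rw [st10_pos_A]
    refine ⟨by omega, ?_⟩
    unfold st10_ord
    rw [if_pos (by omega)]
    have e : k - 1 + 1 = k := by omega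
    rw [e]
  · by_cases h2 : m % 3 = 2
    · rw [st10_pos_B2 ℓ m h2]
      refine ⟨by omega, ?_⟩
      unfold st10_ord
      rw [if_neg (by omega), if_neg (by omega)]
      have e : 3*(4*ℓ+3+m/3 - (4*ℓ+3)) + 2 = m := by omega
      rw [e]
    · rw [st10_pos_B ℓ m h2]
      refine ⟨by omega, ?_⟩
      unfold st10_ord
      rw [if_neg (by omega), if_pos (by omega), if_neg (by omega)]
      have e : ℓ + m + 1 - ℓ - 1 = m := by omega
      rw [e]
  · rw [st10_pos_C]
    refine ⟨by omega, ?_⟩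
    unfold st10_ord
    rw [if_neg (by omega), if_pos (by omega), if_pos (by omega)]
    have e : (ℓ + 3*t - ℓ)/3 = t := by omega
    rw [e]

lemma st10_card_le {n : ℕ} {S : Set (Fin n)} {p q : ℕ}
    (h : ∀ j ∈ S, (j : ℕ) = p ∨ (j : ℕ) = q) : S.ncard ≤ 2 := by
  have h1 : Fin.val '' S ⊆ {p, q} := by
    rintro _ ⟨j, hj, rfl⟩
    simpa using h j hj
  have h2 : (Fin.val '' S).ncard ≤ ({p, q} : Set ℕ).ncard :=
    Set.ncard_le_ncard h1 (Set.toFinite _)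
  have h3 : S.ncard = (Fin.val '' S).ncard :=
    (Set.ncard_image_of_injective S Fin.val_injective).symm
  have h4 : ({p, q} : Set ℕ).ncard ≤ 2 := by
    have := Set.ncard_insert_le p ({q} : Set ℕ)
    simpa using this
  omega

/-- The gadget `F_ℓ` has degeneracy at most 2 witnessed by an ordering whose initial
segment is `A = {a₁,…,a_{ℓ+1}}`: there is an enumeration of the `5ℓ+3` vertices of
`F_ℓ` beginning with the vertices of `A` in which every vertex has at most two
neighbours preceding it. -/
theorem stmt_10 (ℓ : ℕ) (hℓ : 1 ≤ ℓ) :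
    ∃ ord : Fin (5*ℓ + 3) → ℕ ⊕ ℕ ⊕ ℕ, Function.Injective ord ∧
      Set.range ord = gadgetVerts ℓ ∧
      (∀ i : Fin (5*ℓ + 3), i.val < ℓ + 1 → ∃ k, 1 ≤ k ∧ k ≤ ℓ + 1 ∧ ord i = gA k) ∧
      (∀ i : Fin (5*ℓ + 3),
        ({j : Fin (5*ℓ + 3) | j < i ∧ gadgetAdj ℓ (ord j) (ord i)}).ncard ≤ 2) := by
  refine ⟨fun i => st10_ord ℓ i.val, ?_, ?_, ?_, ?_⟩
  · intro i j hij
    have hi := (st10_pos_ord ℓ i.val i.isLt).2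
    have hj := (st10_pos_ord ℓ j.val j.isLt).2
    apply Fin.ext
    rw [← hi, ← hj]
    exact congrArg (st10_pos ℓ) hij
  · apply Set.eq_of_subset_of_subset
    · rintro _ ⟨i, rfl⟩
      exact (st10_pos_ord ℓ i.val i.isLt).1
    · intro v hv
      obtain ⟨h1, h2⟩ := st10_ord_pos ℓ hℓ v hv
      exact ⟨⟨st10_pos ℓ v, h1⟩, h2⟩
  · intro i hi
    refine ⟨i.val + 1, by omega, by omega, ?_⟩
    show st10_ord ℓ i.val = gA (i.val + 1)
    unfold st10_ord
    rw [if_pos (by omega)]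
  · intro i
    obtain ⟨hmem, hpos⟩ := st10_pos_ord ℓ i.val i.isLt
    rcases hmem with ⟨k, hk1, hk2, hv⟩ | ⟨m, hm, hv⟩ | ⟨k, hk1, hk2, hv⟩
    -- Case A : ord i = gA k, position k-1
    · have hip : k - 1 = (i : ℕ) := by rw [← hpos, hv, st10_pos_A]
      apply st10_card_le (p := 0) (q := 0)
      rintro j ⟨hji, c, he | he⟩ <;> exfalso <;>
        have hji' : (j : ℕ) < (i : ℕ) := hji <;>
        have hj2 := (st10_pos_ord ℓ j.val j.isLt).2
      · replace he : gadgetEdgeAux ℓ c (st10_ord ℓ j.val) (st10_ord ℓ i.val) := he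
        rcases st10_edge_char hℓ he with ⟨t, ht, hu, hw⟩ | ⟨t, ht1, ht2, hw, hu⟩ |
          ⟨t, s, ht, hs, hu, hw⟩ <;> rw [hv] at hw
        · rcases hw with hw | hw <;> simp [gA, gB] at hw
        · simp [gA, gC] at hw
        · simp [gA, gB] at hw
      · replace he : gadgetEdgeAux ℓ c (st10_ord ℓ i.val) (st10_ord ℓ j.val) := he
        rcases st10_edge_char hℓ he with ⟨t, ht, hu, hw⟩ | ⟨t, ht1, ht2, hw, hu⟩ |
          ⟨t, s, ht, hs, hu, hw⟩
        · have hkt : k = t + 1 := by rw [hv] at hu; simpa [gA] using hu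
          rcases hw with hw | hw <;> rw [hw] at hj2
          · rw [st10_pos_B ℓ (3*t) (by omega)] at hj2; omega
          · rw [st10_pos_B ℓ (3*t+1) (by omega)] at hj2; omega
        · rcases hu with hu | hu | hu | hu <;> rw [hv] at hu <;> simp [gA, gB] at hu
        · rw [hv] at hu; simp [gA, gB] at hu
    -- Case B : ord i = gB m
    · by_cases hm2 : m % 3 = 2
      · have hip : 4*ℓ+3+m/3 = (i : ℕ) := by rw [← hpos, hv, st10_pos_B2 ℓ m hm2]
        apply st10_card_le (p := ℓ + m) (q := ℓ + m + 2)
        rintro j ⟨hji, c, he | he⟩ <;>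
          have hji' : (j : ℕ) < (i : ℕ) := hji <;>
          have hj2 := (st10_pos_ord ℓ j.val j.isLt).2
        · replace he : gadgetEdgeAux ℓ c (st10_ord ℓ j.val) (st10_ord ℓ i.val) := he
          rcases st10_edge_char hℓ he with ⟨t, ht, hu, hw⟩ | ⟨t, ht1, ht2, hw, hu⟩ |
            ⟨t, s, ht, hs, hu, hw⟩
          · rcases hw with hw | hw <;> rw [hv] at hw <;> simp [gB] at hw <;> omega
          · rw [hv] at hw; simp [gB, gC] at hw
          · rw [hv] at hw; simp [gB] at hw
            rw [hu] at hj2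
            rcases hs with rfl | rfl
            · rw [st10_pos_B ℓ (3*t+1) (by omega)] at hj2; omega
            · rw [st10_pos_B2 ℓ (3*t+2) (by omega)] at hj2; omega
        · replace he : gadgetEdgeAux ℓ c (st10_ord ℓ i.val) (st10_ord ℓ j.val) := he
          rcases st10_edge_char hℓ he with ⟨t, ht, hu, hw⟩ | ⟨t, ht1, ht2, hw, hu⟩ |
            ⟨t, s, ht, hs, hu, hw⟩
          · rw [hv] at hu; simp [gA, gB] at hu
          · rcases hu with hu | hu | hu | hu <;> rw [hv] at hu <;> simp [gB] at hu <;> omega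
          · rw [hv] at hu; simp [gB] at hu
            rw [hw] at hj2
            rcases hs with rfl | rfl
            · omega
            · rw [st10_pos_B ℓ (3*t+3) (by omega)] at hj2; omega
      · have hip : ℓ + m + 1 = (i : ℕ) := by rw [← hpos, hv, st10_pos_B ℓ m hm2]
        apply st10_card_le (p := m/3) (q := ℓ + 3*(m/3))
        rintro j ⟨hji, c, he | he⟩ <;>
          have hji' : (j : ℕ) < (i : ℕ) := hji <;>
          have hj2 := (st10_pos_ord ℓ j.val j.isLt).2
        · replace he : gadgetEdgeAux ℓ c (st10_ord ℓ j.val) (st10_ord ℓ i.val) := he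
          rcases st10_edge_char hℓ he with ⟨t, ht, hu, hw⟩ | ⟨t, ht1, ht2, hw, hu⟩ |
            ⟨t, s, ht, hs, hu, hw⟩
          · rw [hu] at hj2
            rw [st10_pos_A] at hj2
            rcases hw with hw | hw <;> rw [hv] at hw <;> simp [gB] at hw <;> omega
          · rw [hv] at hw; simp [gB, gC] at hw
          · rw [hv] at hw; simp [gB] at hw
            rw [hu] at hj2
            rcases hs with rfl | rfl
            · omega
            · rw [st10_pos_B2 ℓ (3*t+2) (by omega)] at hj2; omega
        · replace he : gadgetEdgeAux ℓ c (st10_ord ℓ i.val) (st10_ord ℓ j.val) := he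
          rcases st10_edge_char hℓ he with ⟨t, ht, hu, hw⟩ | ⟨t, ht1, ht2, hw, hu⟩ |
            ⟨t, s, ht, hs, hu, hw⟩
          · rw [hv] at hu; simp [gA, gB] at hu
          · rw [hw] at hj2
            rw [st10_pos_C] at hj2
            rcases hu with hu | hu | hu | hu <;> rw [hv] at hu <;> simp [gB] at hu <;> omega
          · rw [hv] at hu; simp [gB] at hu
            rw [hw] at hj2
            rcases hs with rfl | rfl
            · rw [st10_pos_B2 ℓ (3*t+2) (by omega)] at hj2; omega
            · omega
    -- Case C : ord i = gC k, position ℓ + 3k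
    · have hip : ℓ + 3*k = (i : ℕ) := by rw [← hpos, hv, st10_pos_C]
      apply st10_card_le (p := ℓ + 3*k - 2) (q := ℓ + 3*k - 1)
      rintro j ⟨hji, c, he | he⟩ <;>
        have hji' : (j : ℕ) < (i : ℕ) := hji <;>
        have hj2 := (st10_pos_ord ℓ j.val j.isLt).2
      · replace he : gadgetEdgeAux ℓ c (st10_ord ℓ j.val) (st10_ord ℓ i.val) := he
        rcases st10_edge_char hℓ he with ⟨t, ht, hu, hw⟩ | ⟨t, ht1, ht2, hw, hu⟩ |
          ⟨t, s, ht, hs, hu, hw⟩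
        · rcases hw with hw | hw <;> rw [hv] at hw <;> simp [gB, gC] at hw
        · have hkt : k = t := by rw [hv] at hw; simpa [gC] using hw
          rcases hu with hu | hu | hu | hu <;> rw [hu] at hj2
          · rw [st10_pos_B ℓ (3*t-3) (by omega)] at hj2; omega
          · rw [st10_pos_B ℓ (3*t-2) (by omega)] at hj2; omega
          · rw [st10_pos_B ℓ (3*t) (by omega)] at hj2; omega
          · rw [st10_pos_B ℓ (3*t+1) (by omega)] at hj2; omega
        · rw [hv] at hw; simp [gB, gC] at hw
      · replace he : gadgetEdgeAux ℓ c (st10_ord ℓ i.val) (st10_ord ℓ j.val) := he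
        rcases st10_edge_char hℓ he with ⟨t, ht, hu, hw⟩ | ⟨t, ht1, ht2, hw, hu⟩ |
          ⟨t, s, ht, hs, hu, hw⟩
        · rw [hv] at hu; simp [gA, gC] at hu
        · rcases hu with hu | hu | hu | hu <;> rw [hv] at hu <;> simp [gB, gC] at hu
        · rw [hv] at hu; simp [gB, gC] at hu
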